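/- arXiv:2409.11963 — 4 statements merged into one kernel-verified Lean document; each statement's English description precedes it below -/
import Mathlib

section
/- Let 2 < p < 6, let n ≥ 0 be an integer, and let (ξ, ξ+2/p) be an interval at level n. Then ξ = n + (4/p)k for some integer k, and (ξ, ξ+2/p) intersects exactly one interval at level n+1, namely (ξ+1−4/p, ξ+1−2/p). Moreover, when p = 2 or p = 6, the interval (ξ, ξ+2/p) at level n intersects no interval at level n+1 (the endpoint of an interval at level n is an endpoint of an interval at level n+1). -/
open MeasureTheory Real Set

/-- `(ξ, ξ + 2/p)` is an *interval at level `n`*, i.e. a connected component of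
`{x : ℝ | sin ((p/2) π (x - n)) > 0}`. -/
def IntervalAtLevel (p : ℝ) (n : ℕ) (ξ : ℝ) : Prop :=
  ∃ x ∈ {y : ℝ | 0 < Real.sin (p / 2 * π * (y - n))},
    connectedComponentIn {y : ℝ | 0 < Real.sin (p / 2 * π * (y - n))} x
      = Set.Ioo ξ (ξ + 2 / p)

lemma sin_pos_iff_exists_int (θ : ℝ) :
    0 < Real.sin θ ↔ ∃ k : ℤ, 2 * k * π < θ ∧ θ < 2 * k * π + π := by
  constructor
  · intro h
    refine ⟨⌊θ / (2 * π)⌋, ?_, ?_⟩ <;>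
    · have h2π : (0:ℝ) < 2 * π := by positivity
      have h1 : (⌊θ / (2 * π)⌋ : ℝ) * (2 * π) ≤ θ := by
        rw [← le_div_iff₀ h2π]; exact Int.floor_le _
      have h2 : θ < ((⌊θ / (2 * π)⌋ : ℝ) + 1) * (2 * π) := by
        rw [← div_lt_iff₀ h2π]; exact Int.lt_floor_add_one _
      have hs : Real.sin (θ - ⌊θ / (2 * π)⌋ * (2 * π)) = Real.sin θ :=
        Real.sin_sub_int_mul_two_pi θ _
      set u := θ - (⌊θ / (2 * π)⌋ : ℝ) * (2 * π) with hu
      have hu0 : 0 ≤ u := by simp [hu]; linarith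
      have hu2 : u < 2 * π := by simp [hu]; linarith
      have hupos : 0 < Real.sin u := hs ▸ h
      have h3 : u < π := by
        by_contra hle
        push_neg at hle
        have : Real.sin u ≤ 0 := by
          have := Real.sin_nonneg_of_nonneg_of_le_pi (x := u - π) (by linarith) (by linarith)
          have heq : Real.sin (u - π) = -Real.sin u := by
            rw [Real.sin_sub]; simp
          linarith [heq ▸ this]
        linarith
      have h4 : 0 < u := by
        rcases eq_or_lt_of_le hu0 with h0 | h0
        · exfalso; rw [← h0] at hupos; simp at hupos
        · exact h0
      simp only [hu] at h3 h4; linarith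
  · rintro ⟨k, h1, h2⟩
    have hs : Real.sin (θ - k * (2 * π)) = Real.sin θ :=
      Real.sin_sub_int_mul_two_pi θ k
    rw [← hs]
    exact Real.sin_pos_of_pos_of_lt_pi (by linarith) (by linarith)

lemma mem_level_set_iff {p : ℝ} (hp : 0 < p) (n : ℕ) (y : ℝ) :
    0 < Real.sin (p / 2 * π * (y - n)) ↔
      ∃ k : ℤ, (n : ℝ) + 4 / p * k < y ∧ y < (n : ℝ) + 4 / p * k + 2 / p := by
  rw [sin_pos_iff_exists_int]
  have hπ := Real.pi_pos
  have hc : (0:ℝ) < p / 2 * π := by positivity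
  have key : ∀ k : ℤ, p / 2 * π * ((n : ℝ) + 4 / p * k - n) = 2 * k * π := by
    intro k; field_simp; ring
  have key2 : ∀ k : ℤ, p / 2 * π * ((n : ℝ) + 4 / p * k + 2 / p - n) = 2 * k * π + π := by
    intro k; field_simp; ring
  constructor
  · rintro ⟨k, h1, h2⟩
    refine ⟨k, ?_, ?_⟩
    · rw [← key k] at h1
      have := (mul_lt_mul_iff_right₀ hc).1 h1
      linarith
    · rw [← key2 k] at h2
      have := (mul_lt_mul_iff_right₀ hc).1 h2
      linarith
  · rintro ⟨k, h1, h2⟩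
    refine ⟨k, ?_, ?_⟩
    · rw [← key k]
      exact (mul_lt_mul_iff_right₀ hc).2 (by linarith)
    · rw [← key2 k]
      exact (mul_lt_mul_iff_right₀ hc).2 (by linarith)

lemma comp_eq {p : ℝ} (hp : 0 < p) (n : ℕ) (k : ℤ) (x : ℝ)
    (hx1 : (n : ℝ) + 4 / p * k < x) (hx2 : x < (n : ℝ) + 4 / p * k + 2 / p) :
    connectedComponentIn {y : ℝ | 0 < Real.sin (p / 2 * π * (y - n))} x
      = Set.Ioo ((n : ℝ) + 4 / p * k) ((n : ℝ) + 4 / p * k + 2 / p) := by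
  set a := (n : ℝ) + 4 / p * k with ha
  set S := {y : ℝ | 0 < Real.sin (p / 2 * π * (y - n))} with hS
  have hsub : Set.Ioo a (a + 2 / p) ⊆ S := fun y hy =>
    (mem_level_set_iff hp n y).2 ⟨k, hy.1, hy.2⟩
  have hxS : x ∈ S := hsub ⟨hx1, hx2⟩
  have hxmem : x ∈ connectedComponentIn S x := mem_connectedComponentIn hxS
  have hcs : connectedComponentIn S x ⊆ S := connectedComponentIn_subset S x
  have hoc : (connectedComponentIn S x).OrdConnected :=
    isPreconnected_connectedComponentIn.ordConnected
  have haS : a ∉ S := by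
    intro h
    have harg : p / 2 * π * (a - n) = ((2 * k : ℤ) : ℝ) * π := by
      push_cast; rw [ha]; field_simp; ring
    have := h
    rw [hS, mem_setOf_eq, harg, Real.sin_int_mul_pi] at this
    exact lt_irrefl 0 this
  have hbS : a + 2 / p ∉ S := by
    intro h
    have harg : p / 2 * π * (a + 2 / p - n) = ((2 * k + 1 : ℤ) : ℝ) * π := by
      push_cast; rw [ha]; field_simp; ring
    have := h
    rw [hS, mem_setOf_eq, harg, Real.sin_int_mul_pi] at this
    exact lt_irrefl 0 this
  apply Subset.antisymm
  · intro y hy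
    constructor
    · by_contra hle
      push_neg at hle
      exact haS (hcs (hoc.out hy hxmem ⟨hle, le_of_lt hx1⟩))
    · by_contra hle
      push_neg at hle
      exact hbS (hcs (hoc.out hxmem hy ⟨le_of_lt hx2, hle⟩))
  · exact isPreconnected_Ioo.subset_connectedComponentIn ⟨hx1, hx2⟩ hsub

lemma intervalAtLevel_iff {p : ℝ} (hp : 0 < p) (n : ℕ) (ξ : ℝ) :
    IntervalAtLevel p n ξ ↔ ∃ k : ℤ, ξ = (n : ℝ) + 4 / p * k := by
  constructor
  · rintro ⟨x, hx, hcomp⟩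
    obtain ⟨k, h1, h2⟩ := (mem_level_set_iff hp n x).1 hx
    have := comp_eq hp n k x h1 h2
    rw [hcomp] at this
    have hlt : ξ < ξ + 2 / p := by
      have : (0:ℝ) < 2 / p := by positivity
      linarith
    have hlt2 : (n : ℝ) + 4 / p * k < (n : ℝ) + 4 / p * k + 2 / p := by
      have : (0:ℝ) < 2 / p := by positivity
      linarith
    refine ⟨k, ?_⟩
    calc ξ = sInf (Set.Ioo ξ (ξ + 2 / p)) := (csInf_Ioo hlt).symm
    _ = sInf (Set.Ioo ((n:ℝ) + 4 / p * k) ((n:ℝ) + 4 / p * k + 2 / p)) := by rw [this]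
    _ = (n : ℝ) + 4 / p * k := csInf_Ioo hlt2
  · rintro ⟨k, rfl⟩
    have h0 : (0:ℝ) < 1 / p := by positivity
    have h1 : (1:ℝ) / p < 2 / p := by
      rw [div_lt_div_iff₀ hp hp]; nlinarith
    refine ⟨(n : ℝ) + 4 / p * k + 1 / p, ?_, ?_⟩
    · exact (mem_level_set_iff hp n _).2 ⟨k, by linarith, by linarith⟩
    · exact comp_eq hp n k ((n : ℝ) + 4 / p * k + 1 / p) (by linarith) (by linarith)

theorem stmt8 (p : ℝ) (n : ℕ) (ξ : ℝ) (hp2 : 2 ≤ p) (hp6 : p ≤ 6)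
    (hI : IntervalAtLevel p n ξ) :
    (2 < p → p < 6 →
      ((∃ k : ℤ, ξ = (n : ℝ) + (4 / p) * k) ∧
        IntervalAtLevel p (n + 1) (ξ + 1 - 4 / p) ∧
        (Set.Ioo ξ (ξ + 2 / p) ∩ Set.Ioo (ξ + 1 - 4 / p) (ξ + 1 - 2 / p)).Nonempty ∧
        ∀ η : ℝ, IntervalAtLevel p (n + 1) η →
          (Set.Ioo ξ (ξ + 2 / p) ∩ Set.Ioo η (η + 2 / p)).Nonempty →
            η = ξ + 1 - 4 / p)) ∧
    ((p = 2 ∨ p = 6) →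
      ((∀ η : ℝ, IntervalAtLevel p (n + 1) η →
          Set.Ioo ξ (ξ + 2 / p) ∩ Set.Ioo η (η + 2 / p) = ∅) ∧
        ∀ e : ℝ, (e = ξ ∨ e = ξ + 2 / p) →
          ∃ η : ℝ, IntervalAtLevel p (n + 1) η ∧ (e = η ∨ e = η + 2 / p))) := by
  have hp0 : (0:ℝ) < p := by linarith
  have hp0' : p ≠ 0 := ne_of_gt hp0
  obtain ⟨k, hk⟩ := (intervalAtLevel_iff hp0 n ξ).1 hI
  constructor
  · intro hlt hgt
    have h2p : (0:ℝ) < 2 / p := by positivity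
    have h2p1 : 2 / p < 1 := by rw [div_lt_one hp0]; linarith
    have h42 : 2 / p < 4 / p := by rw [div_lt_div_iff₀ hp0 hp0]; nlinarith
    have h6p : (1:ℝ) < 6 / p := by rw [lt_div_iff₀ hp0]; linarith
    have h64 : (6:ℝ) / p = 4 / p + 2 / p := by ring
    refine ⟨⟨k, hk⟩, ?_, ?_, ?_⟩
    · rw [intervalAtLevel_iff hp0]
      exact ⟨k - 1, by rw [hk]; push_cast; ring⟩
    · have hA : ξ < ξ + 2 / p := by linarith
      have hB : ξ < ξ + 1 - 2 / p := by linarith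
      have hC : ξ + 1 - 4 / p < ξ + 2 / p := by linarith
      have hD : ξ + 1 - 4 / p < ξ + 1 - 2 / p := by linarith
      have hmm : max ξ (ξ + 1 - 4 / p) < min (ξ + 2 / p) (ξ + 1 - 2 / p) :=
        max_lt (lt_min hA hB) (lt_min hC hD)
      refine ⟨(max ξ (ξ + 1 - 4 / p) + min (ξ + 2 / p) (ξ + 1 - 2 / p)) / 2, ?_, ?_⟩
      · constructor
        · calc ξ ≤ max ξ (ξ + 1 - 4 / p) := le_max_left _ _
            _ < _ := by linarith
        · calc (max ξ (ξ + 1 - 4 / p) + min (ξ + 2 / p) (ξ + 1 - 2 / p)) / 2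
              < min (ξ + 2 / p) (ξ + 1 - 2 / p) := by linarith
            _ ≤ ξ + 2 / p := min_le_left _ _
      · constructor
        · calc ξ + 1 - 4 / p ≤ max ξ (ξ + 1 - 4 / p) := le_max_right _ _
            _ < _ := by linarith
        · calc (max ξ (ξ + 1 - 4 / p) + min (ξ + 2 / p) (ξ + 1 - 2 / p)) / 2
              < min (ξ + 2 / p) (ξ + 1 - 2 / p) := by linarith
            _ ≤ ξ + 1 - 2 / p := min_le_right _ _
    · rintro η hη ⟨y, hy1, hy2⟩
      obtain ⟨m, hm⟩ := (intervalAtLevel_iff hp0 (n + 1) η).1 hη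
      have hd1 : η - ξ < 2 / p := by
        have := lt_trans hy2.1 hy1.2; linarith
      have hd2 : ξ - η < 2 / p := by
        have := lt_trans hy1.1 hy2.2; linarith
      have hdiff : ξ - η = -1 + 4 / p * ((k : ℝ) - (m : ℝ)) := by
        rw [hk, hm]; push_cast; ring
      set d : ℝ := (k : ℝ) - (m : ℝ) with hd
      have key1 : -(2 / p) < -1 + 4 / p * d := by rw [← hdiff]; linarith
      have key2 : -1 + 4 / p * d < 2 / p := by rw [← hdiff]; linarith
      have m1 : (-(2 / p)) * p = -2 := by field_simp
      have m2 : (-1 + 4 / p * d) * p = -p + 4 * d := by field_simp; try ring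
      have m3 : (2 / p) * p = 2 := by field_simp
      have k1 : -2 < -p + 4 * d := by
        have := mul_lt_mul_of_pos_right key1 hp0; rw [m1, m2] at this; exact this
      have k2 : -p + 4 * d < 2 := by
        have := mul_lt_mul_of_pos_right key2 hp0; rw [m2, m3] at this; exact this
      have hz1 : (0:ℝ) < ((k - m : ℤ) : ℝ) := by push_cast; rw [← hd]; linarith
      have hz2 : ((k - m : ℤ) : ℝ) < 2 := by push_cast; rw [← hd]; linarith
      have hi1 : 0 < k - m := by exact_mod_cast hz1
      have hi2 : k - m < 2 := by exact_mod_cast hz2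
      have hm1 : m = k - 1 := by omega
      rw [hm, hm1, hk]; push_cast; ring
  · intro hp26
    constructor
    · intro η hη
      obtain ⟨m, hm⟩ := (intervalAtLevel_iff hp0 (n + 1) η).1 hη
      rw [Set.eq_empty_iff_forall_notMem]
      rintro y ⟨hy1, hy2⟩
      have hd1 : η - ξ < 2 / p := by
        have := lt_trans hy2.1 hy1.2; linarith
      have hd2 : ξ - η < 2 / p := by
        have := lt_trans hy1.1 hy2.2; linarith
      have hdiff : ξ - η = -1 + 4 / p * ((k : ℝ) - (m : ℝ)) := by
        rw [hk, hm]; push_cast; ring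
      set d : ℝ := (k : ℝ) - (m : ℝ) with hd
      have key1 : -(2 / p) < -1 + 4 / p * d := by rw [← hdiff]; linarith
      have key2 : -1 + 4 / p * d < 2 / p := by rw [← hdiff]; linarith
      have m1 : (-(2 / p)) * p = -2 := by field_simp
      have m2 : (-1 + 4 / p * d) * p = -p + 4 * d := by field_simp; try ring
      have m3 : (2 / p) * p = 2 := by field_simp
      have k1 : -2 < -p + 4 * d := by
        have := mul_lt_mul_of_pos_right key1 hp0; rw [m1, m2] at this; exact this
      have k2 : -p + 4 * d < 2 := by
        have := mul_lt_mul_of_pos_right key2 hp0; rw [m2, m3] at this; exact this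
      rcases hp26 with rfl | rfl
      · have hz1 : (0:ℝ) < ((k - m : ℤ) : ℝ) := by push_cast; rw [← hd]; linarith
        have hz2 : ((k - m : ℤ) : ℝ) < 1 := by push_cast; rw [← hd]; linarith
        have hi1 : 0 < k - m := by exact_mod_cast hz1
        have hi2 : k - m < 1 := by exact_mod_cast hz2
        omega
      · have hz1 : (1:ℝ) < ((k - m : ℤ) : ℝ) := by push_cast; rw [← hd]; linarith
        have hz2 : ((k - m : ℤ) : ℝ) < 2 := by push_cast; rw [← hd]; linarith
        have hi1 : 1 < k - m := by exact_mod_cast hz1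
        have hi2 : k - m < 2 := by exact_mod_cast hz2
        omega
    · intro e he
      rcases hp26 with rfl | rfl
      · rcases he with he | he
        · refine ⟨e - 1, ?_, Or.inr (by norm_num)⟩
          rw [intervalAtLevel_iff (by norm_num : (0:ℝ) < 2)]
          exact ⟨k - 1, by rw [he, hk]; push_cast; ring⟩
        · refine ⟨e, ?_, Or.inl rfl⟩
          rw [intervalAtLevel_iff (by norm_num : (0:ℝ) < 2)]
          exact ⟨k, by rw [he, hk]; push_cast; ring⟩
      · rcases he with he | he
        · refine ⟨e - 2 / 6, ?_, Or.inr (by norm_num)⟩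
          rw [intervalAtLevel_iff (by norm_num : (0:ℝ) < 6)]
          exact ⟨k - 2, by rw [he, hk]; push_cast; ring⟩
        · refine ⟨e, ?_, Or.inl rfl⟩
          rw [intervalAtLevel_iff (by norm_num : (0:ℝ) < 6)]
          exact ⟨k - 1, by rw [he, hk]; push_cast; ring⟩
end

section
/- Let 2 ≤ p ≤ 4, let (ξ, ξ+2/p) be an interval at level n with ξ + 1 − 4/p > 0, and let t satisfy ξ + 1 − 4/p ≤ t ≤ ξ + 1. Then S(t) ≤ S(ξ + 1 − 4/p), i.e. S is maximized at t = ξ + 1 − 4/p. -/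
open MeasureTheory Real Set


lemma auxCont (k v : ℝ) {S : Set ℝ} (hS : ∀ x ∈ S, x ≠ 0) :
    ContinuousOn (fun x => Real.sin (k * (x - v)) ^ 2 / (π ^ 2 * x ^ 2)) S := by
  apply ContinuousOn.div
  · fun_prop
  · fun_prop
  · intro x hx
    have h := hS x hx
    positivity

lemma auxInt (k v a u : ℝ) (ha : 0 < a) :
    IntegrableOn (fun x => Real.sin (k * (x - v)) ^ 2 / (π ^ 2 * x ^ 2)) (Ioo a u) := by
  refine (ContinuousOn.integrableOn_Icc (auxCont k v ?_)).mono_set Ioo_subset_Icc_self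
  intro x hx
  exact ne_of_gt (lt_of_lt_of_le ha hx.1)

lemma auxII (k v a u : ℝ) (ha : 0 < a) (hu : 0 < u) :
    IntervalIntegrable (fun x => Real.sin (k * (x - v)) ^ 2 / (π ^ 2 * x ^ 2)) volume a u :=
  (auxCont k v fun _ hx => ne_of_gt (lt_of_lt_of_le (lt_min ha hu) hx.1)).intervalIntegrable

lemma auxInd (f : ℝ → ℝ) (a b : ℝ) (s : Set ℝ) (hab : a ≤ b) (hs : MeasurableSet s) :
    (∫ x in a..b, s.indicator f x) = ∫ x in Set.Ioo a b ∩ s, f x := by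
  rw [intervalIntegral.integral_of_le hab, MeasureTheory.integral_Ioc_eq_integral_Ioo,
    MeasureTheory.setIntegral_indicator hs]

/-- The quantity `S(t)` attached to the interval `(ξ, ξ + 2/p)` at level `n`. -/
noncomputable def S (p : ℝ) (n : ℕ) (ξ t : ℝ) : ℝ :=
  (∫ x in ξ..(ξ + 2 / p),
    (Set.Ioo ξ t).indicator
      (fun y => Real.sin (p / 2 * π * (y - n)) ^ 2 / (π ^ 2 * y ^ 2)) x) +
  ∫ x in (ξ + 1 - 4 / p)..(ξ + 1 - 2 / p),
    (Set.Ioo t (ξ + 1 - 2 / p)).indicator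
      (fun y => Real.sin (p / 2 * π * (y - ((n : ℝ) + 1))) ^ 2 / (π ^ 2 * y ^ 2)) x

theorem stmt9 (p : ℝ) (n : ℕ) (ξ t : ℝ) (hp2 : 2 ≤ p) (hp4 : p ≤ 4)
    (hI : IntervalAtLevel p n ξ) (hpos : 0 < ξ + 1 - 4 / p)
    (ht1 : ξ + 1 - 4 / p ≤ t) (ht2 : t ≤ ξ + 1) :
    S p n ξ t ≤ S p n ξ (ξ + 1 - 4 / p) := by
  clear hI
  have hp0 : (0:ℝ) < p := by linarith
  have hπ : (0:ℝ) < π := Real.pi_pos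
  have h41 : 1 ≤ 4 / p := by rw [le_div_iff₀ hp0]; linarith
  have h21 : 2 / p ≤ 1 := by rw [div_le_one hp0]; linarith
  have h2p : (0:ℝ) < 2 / p := by positivity
  set c := ξ + 1 - 4 / p with hc
  set b := ξ + 2 / p with hb
  set d := ξ + 1 - 2 / p with hd
  have hcξ : c ≤ ξ := by rw [hc]; linarith
  have hξ0 : 0 < ξ := lt_of_lt_of_le hpos hcξ
  have hξb : ξ ≤ b := by rw [hb]; linarith
  have hξd : ξ ≤ d := by rw [hd]; linarith
  have hcd : c ≤ d := le_trans hcξ hξd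
  set m := t ⊓ d with hm
  have hcm : c ≤ m := le_inf ht1 hcd
  have hmd : m ≤ d := inf_le_right
  have hm0 : 0 < m := lt_of_lt_of_le hpos hcm
  set s := 4 / p - 1 with hs
  have hs0 : (0:ℝ) ≤ s := by rw [hs]; linarith
  have hcs : c + s = ξ := by rw [hc, hs]; ring
  simp only [S]
  set f : ℝ → ℝ := fun x => Real.sin (p / 2 * π * (x - n)) ^ 2 / (π ^ 2 * x ^ 2) with hfdef
  set g : ℝ → ℝ := fun x => Real.sin (p / 2 * π * (x - ((n : ℝ) + 1))) ^ 2 / (π ^ 2 * x ^ 2)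
    with hgdef
  rw [auxInd f ξ b _ hξb measurableSet_Ioo, auxInd f ξ b _ hξb measurableSet_Ioo,
    auxInd g c d _ hcd measurableSet_Ioo, auxInd g c d _ hcd measurableSet_Ioo,
    Set.Ioo_inter_Ioo, Set.Ioo_inter_Ioo, Set.Ioo_inter_Ioo, Set.Ioo_inter_Ioo]
  simp only [sup_idem, inf_idem, sup_of_le_right ht1, ← hd]
  -- RHS first term vanishes
  have hempty : Set.Ioo ξ (b ⊓ c) = (∅ : Set ℝ) :=
    Set.Ioo_eq_empty (by simp only [not_lt]; exact le_trans inf_le_right hcξ)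
  rw [hempty]
  simp only [MeasureTheory.measure_empty, MeasureTheory.setIntegral_empty]  -- maybe wrong names
  have hII_cm : IntervalIntegrable g volume c m := auxII (p / 2 * π) ((n:ℝ)+1) c m hpos hm0
  have hII_md : IntervalIntegrable g volume m d :=
    auxII (p / 2 * π) ((n:ℝ)+1) m d hm0 (lt_of_lt_of_le hpos hcd)
  have hsplit : (∫ x in Set.Ioo c d, g x)
      = (∫ x in Set.Ioo c m, g x) + ∫ x in Set.Ioo m d, g x := by
    have h := intervalIntegral.integral_add_adjacent_intervals (μ := volume) (f := g) hII_cm hII_md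
    rw [intervalIntegral.integral_of_le hcm, intervalIntegral.integral_of_le hmd,
      intervalIntegral.integral_of_le hcd, MeasureTheory.integral_Ioc_eq_integral_Ioo,
      MeasureTheory.integral_Ioc_eq_integral_Ioo,
      MeasureTheory.integral_Ioc_eq_integral_Ioo] at h
    linarith
  have htd : Set.Ioo t d = Set.Ioo m d := by
    rcases le_total t d with h | h
    · rw [hm, inf_eq_left.mpr h]
    · rw [Set.Ioo_eq_empty (not_lt.mpr h), hm, inf_eq_right.mpr h, Set.Ioo_self]
  rw [htd, hsplit]
  have hbt : b ⊓ t ≤ m + s := by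
    rcases le_total t d with h | h
    · have h1 : b ⊓ t ≤ t := inf_le_right
      rw [hm, inf_eq_left.mpr h]
      linarith
    · have h1 : b ⊓ t ≤ b := inf_le_left
      have h2 : d + s = b := by rw [hd, hs, hb]; ring
      rw [hm, inf_eq_right.mpr h]
      linarith
  have key : (∫ x in Set.Ioo ξ (b ⊓ t), f x) ≤ ∫ x in Set.Ioo c m, g x := by
    have e1 : (∫ x in Set.Ioo ξ (b ⊓ t), f x) ≤ ∫ x in Set.Ioo ξ (m + s), f x := by
      apply MeasureTheory.setIntegral_mono_set
      · exact auxInt (p / 2 * π) (n:ℝ) ξ (m + s) hξ0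
      · exact Filter.Eventually.of_forall fun x => by simp only [hfdef]; positivity
      · exact (Set.Ioo_subset_Ioo_right hbt).eventuallyLE
    have e2 : (∫ x in Set.Ioo ξ (m + s), f x) = ∫ y in Set.Ioo c m, f (y + s) := by
      have h := intervalIntegral.integral_comp_add_right (a := c) (b := m) (d := s) f
      rw [hcs, intervalIntegral.integral_of_le hcm, MeasureTheory.integral_Ioc_eq_integral_Ioo,
        intervalIntegral.integral_of_le (by linarith : ξ ≤ m + s),
        MeasureTheory.integral_Ioc_eq_integral_Ioo] at h
      exact h.symm
    have e3 : (∫ y in Set.Ioo c m, f (y + s)) ≤ ∫ y in Set.Ioo c m, g y := by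
      apply MeasureTheory.setIntegral_mono_on
      · refine (ContinuousOn.integrableOn_Icc ?_).mono_set Set.Ioo_subset_Icc_self
        simp only [hfdef]
        apply ContinuousOn.div
        · fun_prop
        · fun_prop
        · intro x hx
          have hx1 : c ≤ x := hx.1
          have hxs : (0:ℝ) < x + s := by linarith
          positivity
      · exact auxInt (p / 2 * π) ((n:ℝ)+1) c m hpos
      · exact measurableSet_Ioo
      · intro y hy
        have hy0 : 0 < y := lt_trans hpos hy.1
        have hsin : Real.sin (p / 2 * π * (y + s - ↑n))
            = Real.sin (p / 2 * π * (y - ((n:ℝ) + 1))) := by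
          have harg : p / 2 * π * (y + s - ↑n) = p / 2 * π * (y - ((n:ℝ) + 1)) + 2 * π := by
            rw [hs]; field_simp; ring
          rw [harg, Real.sin_add_two_pi]
        simp only [hfdef, hgdef]
        rw [hsin]
        gcongr
        linarith
    linarith
  linarith
end

section
/- Let 2 ≤ p ≤ 4, let (ξ, ξ+2/p) be an interval at level n with ξ + 1 − 4/p > 0, and set m_ξ = ξ + 1/2 − 1/p. Then S(t₂) ≤ S(t₁) whenever ξ+1−4/p ≤ t₁ ≤ t₂ ≤ m_ξ; S(t₁) ≤ S(t₂) whenever m_ξ ≤ t₁ ≤ t₂ ≤ ξ+2/p; and S(t₁) = S(t₂) whenever ξ+2/p ≤ t₁ ≤ t₂ ≤ ξ+1. -/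
open MeasureTheory Real Set

private lemma sin_mono_aux {u w : ℝ} (hu : 0 ≤ u) (huw : u ≤ w) (hsum : u + w ≤ π) :
    Real.sin u ≤ Real.sin w := by
  have hπ := Real.pi_pos
  have h := Real.sin_sub_sin w u
  have h1 : 0 ≤ Real.sin ((w - u) / 2) :=
    Real.sin_nonneg_of_nonneg_of_le_pi (by linarith) (by linarith)
  have h2 : 0 ≤ Real.cos ((w + u) / 2) :=
    Real.cos_nonneg_of_mem_Icc ⟨by linarith, by linarith⟩
  nlinarith

private lemma key1 {p s : ℝ} (hp2 : 2 ≤ p) (hp4 : p ≤ 4) (h0 : 0 ≤ s) (h1 : s ≤ 1/2 - 1/p) :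
    Real.sin (p/2*π*s) ^ 2 ≤ Real.sin (p/2*π*(s-1)) ^ 2 := by
  have hπ := Real.pi_pos
  have hp0 : 0 < p := by linarith
  have hval : Real.sin (p/2*π*(s-1)) = Real.sin (p/2*π - π - p/2*π*s) := by
    have h : p/2*π*(s-1) = -((p/2*π - π - p/2*π*s) + π) := by ring
    rw [h, Real.sin_neg, Real.sin_add_pi, neg_neg]
  rw [hval]
  have hinv : p * (1/p) = 1 := by field_simp
  have hps : p * s ≤ p/2 - 1 := by nlinarith [mul_le_mul_of_nonneg_left h1 hp0.le]
  have hu0 : 0 ≤ p/2*π*s := mul_nonneg (mul_nonneg (by linarith) hπ.le) h0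
  have huw : p/2*π*s ≤ p/2*π - π - p/2*π*s := by nlinarith [mul_le_mul_of_nonneg_left hps hπ.le]
  have hsum : p/2*π*s + (p/2*π - π - p/2*π*s) ≤ π := by nlinarith
  have hsu : 0 ≤ Real.sin (p/2*π*s) :=
    Real.sin_nonneg_of_nonneg_of_le_pi hu0 (by linarith)
  have hmono := sin_mono_aux hu0 huw hsum
  nlinarith

private lemma key2 {p s : ℝ} (hp2 : 2 ≤ p) (hp4 : p ≤ 4) (h0 : 1/2 - 1/p ≤ s) (h1 : s ≤ 1 - 2/p) :
    Real.sin (p/2*π*(s-1)) ^ 2 ≤ Real.sin (p/2*π*s) ^ 2 := by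
  have hπ := Real.pi_pos
  have hp0 : 0 < p := by linarith
  have hval : Real.sin (p/2*π*(s-1)) = Real.sin (p/2*π - π - p/2*π*s) := by
    have h : p/2*π*(s-1) = -((p/2*π - π - p/2*π*s) + π) := by ring
    rw [h, Real.sin_neg, Real.sin_add_pi, neg_neg]
  rw [hval]
  have hinv : p * (1/p) = 1 := by field_simp
  have hinv2 : p * (2/p) = 2 := by field_simp
  have hps1 : p/2 - 1 ≤ p * s := by nlinarith [mul_le_mul_of_nonneg_left h0 hp0.le]
  have hps2 : p * s ≤ p - 2 := by nlinarith [mul_le_mul_of_nonneg_left h1 hp0.le]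
  have hw0 : 0 ≤ p/2*π - π - p/2*π*s := by nlinarith [mul_le_mul_of_nonneg_left hps2 hπ.le]
  have hwu : p/2*π - π - p/2*π*s ≤ p/2*π*s := by nlinarith [mul_le_mul_of_nonneg_left hps1 hπ.le]
  have hsum : (p/2*π - π - p/2*π*s) + p/2*π*s ≤ π := by nlinarith
  have hsw : 0 ≤ Real.sin (p/2*π - π - p/2*π*s) :=
    Real.sin_nonneg_of_nonneg_of_le_pi hw0 (by linarith)
  have hmono := sin_mono_aux hw0 hwu hsum
  nlinarith

private noncomputable def fA (p : ℝ) (n : ℕ) : ℝ → ℝ :=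
  fun y => Real.sin (p / 2 * π * (y - n)) ^ 2 / (π ^ 2 * y ^ 2)

private noncomputable def fB (p : ℝ) (n : ℕ) : ℝ → ℝ :=
  fun y => Real.sin (p / 2 * π * (y - ((n : ℝ) + 1))) ^ 2 / (π ^ 2 * y ^ 2)

private lemma S_eq (p : ℝ) (n : ℕ) (ξ t : ℝ) (h1 : ξ ≤ ξ + 2 / p)
    (h2 : ξ + 1 - 4 / p ≤ ξ + 1 - 2 / p) :
    S p n ξ t = (∫ x, (Ioc ξ (ξ + 2 / p) ∩ Ioo ξ t).indicator (fA p n) x)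
      + ∫ x, (Ioc (ξ + 1 - 4 / p) (ξ + 1 - 2 / p) ∩ Ioo t (ξ + 1 - 2 / p)).indicator (fB p n) x := by
  unfold S fA fB
  rw [intervalIntegral.integral_of_le h1, intervalIntegral.integral_of_le h2,
    ← integral_indicator measurableSet_Ioc, ← integral_indicator measurableSet_Ioc]
  simp only [Set.indicator_indicator]

set_option maxHeartbeats 1000000 in
theorem stmt10 (p : ℝ) (n : ℕ) (ξ : ℝ) (hp2 : 2 ≤ p) (hp4 : p ≤ 4)
    (hI : IntervalAtLevel p n ξ) (hpos : 0 < ξ + 1 - 4 / p) :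
    (∀ t₁ t₂ : ℝ, ξ + 1 - 4 / p ≤ t₁ → t₁ ≤ t₂ → t₂ ≤ ξ + 1 / 2 - 1 / p →
      S p n ξ t₂ ≤ S p n ξ t₁) ∧
    (∀ t₁ t₂ : ℝ, ξ + 1 / 2 - 1 / p ≤ t₁ → t₁ ≤ t₂ → t₂ ≤ ξ + 2 / p →
      S p n ξ t₁ ≤ S p n ξ t₂) ∧
    (∀ t₁ t₂ : ℝ, ξ + 2 / p ≤ t₁ → t₁ ≤ t₂ → t₂ ≤ ξ + 1 →
      S p n ξ t₁ = S p n ξ t₂) := by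
  have hπ := Real.pi_pos
  have hp0 : 0 < p := by linarith
  have h2p : (0:ℝ) < 2 / p := by positivity
  have h1p0 : (0:ℝ) < 1 / p := by positivity
  have h4p1 : (1:ℝ) ≤ 4 / p := by rw [le_div_iff₀ hp0]; linarith
  have h2p1 : 2 / p ≤ 1 := by rw [div_le_one hp0]; linarith
  have h1p2 : 1 / p ≤ 1 / 2 := by
    rw [div_le_div_iff₀ hp0 (by norm_num : (0:ℝ) < 2)]; linarith
  have h2pe : 2 / p = 1 / p + 1 / p := by ring
  have h42 : 4 / p = 2 / p + 2 / p := by ring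
  have hb1ξ : ξ + 1 - 4 / p ≤ ξ := by linarith
  have hξpos : 0 < ξ := by linarith
  have hm1 : ξ ≤ ξ + 1 / 2 - 1 / p := by linarith
  have hm2 : ξ + 1 / 2 - 1 / p ≤ ξ + 1 - 2 / p := by linarith
  have hb2c2 : ξ + 1 - 2 / p ≤ ξ + 2 / p := by linarith
  -- extract the arithmetic form of ξ
  obtain ⟨x₀, hx₀s, hcomp⟩ := hI
  have hopen : IsOpen {y : ℝ | 0 < Real.sin (p / 2 * π * (y - n))} :=
    isOpen_lt continuous_const (by fun_prop)
  have hsub : Ioo ξ (ξ + 2 / p) ⊆ {y : ℝ | 0 < Real.sin (p / 2 * π * (y - n))} := by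
    rw [← hcomp]; exact connectedComponentIn_subset _ _
  have hx₀ : x₀ ∈ Ioo ξ (ξ + 2 / p) := by
    rw [← hcomp]; exact mem_connectedComponentIn hx₀s
  have hcont : Continuous fun y : ℝ => Real.sin (p / 2 * π * (y - n)) := by fun_prop
  have hge : 0 ≤ Real.sin (p / 2 * π * (ξ - n)) := by
    have htd : Filter.Tendsto (fun y : ℝ => Real.sin (p / 2 * π * (y - n)))
        (nhdsWithin ξ (Ioi ξ)) (nhds (Real.sin (p / 2 * π * (ξ - n)))) :=
      (hcont.tendsto ξ).mono_left nhdsWithin_le_nhds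
    refine ge_of_tendsto htd ?_
    filter_upwards [Ioo_mem_nhdsGT_of_mem (show ξ ∈ Ico ξ (ξ + 2 / p) from ⟨le_refl ξ, by linarith⟩)] with y hy
    exact (hsub hy).le
  have hle : Real.sin (p / 2 * π * (ξ - n)) ≤ 0 := by
    by_contra hlt
    push_neg at hlt
    have hξs : ξ ∈ {y : ℝ | 0 < Real.sin (p / 2 * π * (y - n))} := hlt
    obtain ⟨l, u, hlu, hsubs⟩ := mem_nhds_iff_exists_Ioo_subset.1 (hopen.mem_nhds hξs)
    have hT : Ioo l (ξ + 2 / p) ⊆ {y : ℝ | 0 < Real.sin (p / 2 * π * (y - n))} := by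
      intro y hy
      rcases lt_or_ge y u with h | h
      · exact hsubs ⟨hy.1, h⟩
      · exact hsub ⟨lt_of_lt_of_le hlu.2 h, hy.2⟩
    have hTsub : Ioo l (ξ + 2 / p) ⊆ Ioo ξ (ξ + 2 / p) := by
      rw [← hcomp]
      exact IsPreconnected.subset_connectedComponentIn isPreconnected_Ioo
        ⟨lt_trans hlu.1 hx₀.1, hx₀.2⟩ hT
    have hmem : (l + ξ) / 2 ∈ Ioo l (ξ + 2 / p) := ⟨by linarith [hlu.1], by linarith [hlu.1]⟩
    have := (hTsub hmem).1
    linarith [hlu.1]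
  have hzero : Real.sin (p / 2 * π * (ξ - n)) = 0 := le_antisymm hle hge
  obtain ⟨k, hk⟩ := Real.sin_eq_zero_iff.1 hzero
  obtain ⟨j, hj⟩ : ∃ j : ℤ, p / 2 * π * (ξ - n) = (j : ℝ) * (2 * π) := by
    rcases Int.even_or_odd k with ⟨j, hkj⟩ | ⟨j, hkj⟩
    · exact ⟨j, by rw [← hk, hkj]; push_cast; ring⟩
    · exfalso
      have hmem : ξ + 1 / p ∈ Ioo ξ (ξ + 2 / p) := ⟨by linarith, by linarith⟩
      have hpos' := hsub hmem
      simp only [Set.mem_setOf_eq] at hpos'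
      have h12 : p / 2 * π * (1 / p) = π / 2 := by field_simp
      have harg : p / 2 * π * (ξ + 1 / p - n) = π / 2 + π + (j : ℝ) * (2 * π) := by
        have hsplit : p / 2 * π * (ξ + 1 / p - n)
            = p / 2 * π * (ξ - n) + p / 2 * π * (1 / p) := by ring
        rw [hsplit, h12, ← hk, hkj]; push_cast; ring
      rw [harg, Real.sin_add_int_mul_two_pi, Real.sin_add_pi, Real.sin_pi_div_two] at hpos'
      linarith
  have hsinA : ∀ x : ℝ, Real.sin (p / 2 * π * (x - n)) = Real.sin (p / 2 * π * (x - ξ)) := by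
    intro x
    have h : p / 2 * π * (x - n) = p / 2 * π * (x - ξ) + (j : ℝ) * (2 * π) := by
      rw [← hj]; ring
    rw [h, Real.sin_add_int_mul_two_pi]
  have hsinB : ∀ x : ℝ, Real.sin (p / 2 * π * (x - ((n : ℝ) + 1)))
      = Real.sin (p / 2 * π * (x - ξ - 1)) := by
    intro x
    have h : p / 2 * π * (x - ((n : ℝ) + 1)) = p / 2 * π * (x - ξ - 1) + (j : ℝ) * (2 * π) := by
      rw [← hj]; ring
    rw [h, Real.sin_add_int_mul_two_pi]
  -- basic facts about fA, fB
  have hfA0 : ∀ x, 0 ≤ fA p n x := fun x => by unfold fA; positivity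
  have hfB0 : ∀ x, 0 ≤ fB p n x := fun x => by unfold fB; positivity
  have hfg : ∀ x : ℝ, ξ < x → x ≤ ξ + 1 / 2 - 1 / p → fA p n x ≤ fB p n x := by
    intro x hx1 hx2
    have hx0 : 0 < x := lt_trans hξpos hx1
    have hd : 0 < π ^ 2 * x ^ 2 := mul_pos (pow_pos hπ 2) (pow_pos hx0 2)
    unfold fA fB
    rw [hsinA x, hsinB x]
    have hr : p / 2 * π * (x - ξ - 1) = p / 2 * π * ((x - ξ) - 1) := by ring
    rw [hr]
    exact div_le_div_of_nonneg_right (key1 hp2 hp4 (by linarith) (by linarith)) hd.le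
  have hgf : ∀ x : ℝ, ξ + 1 / 2 - 1 / p ≤ x → x ≤ ξ + 1 - 2 / p → fB p n x ≤ fA p n x := by
    intro x hx1 hx2
    have hx0 : 0 < x := by linarith
    have hd : 0 < π ^ 2 * x ^ 2 := mul_pos (pow_pos hπ 2) (pow_pos hx0 2)
    unfold fA fB
    rw [hsinA x, hsinB x]
    have hr : p / 2 * π * (x - ξ - 1) = p / 2 * π * ((x - ξ) - 1) := by ring
    rw [hr]
    exact div_le_div_of_nonneg_right (key2 hp2 hp4 (by linarith) (by linarith)) hd.le
  -- integrability
  have hcA : ContinuousOn (fA p n) (Icc ξ (ξ + 2 / p)) := by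
    unfold fA
    apply ContinuousOn.div
    · fun_prop
    · fun_prop
    · intro y hy
      have hy0 : 0 < y := lt_of_lt_of_le hξpos hy.1
      exact ne_of_gt (mul_pos (pow_pos hπ 2) (pow_pos hy0 2))
  have hiA : IntegrableOn (fA p n) (Ioc ξ (ξ + 2 / p)) :=
    hcA.integrableOn_Icc.mono_set Ioc_subset_Icc_self
  have hcB : ContinuousOn (fB p n) (Icc (ξ + 1 - 4 / p) (ξ + 1 - 2 / p)) := by
    unfold fB
    apply ContinuousOn.div
    · fun_prop
    · fun_prop
    · intro y hy
      have hy0 : 0 < y := lt_of_lt_of_le hpos hy.1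
      exact ne_of_gt (mul_pos (pow_pos hπ 2) (pow_pos hy0 2))
  have hiB : IntegrableOn (fB p n) (Ioc (ξ + 1 - 4 / p) (ξ + 1 - 2 / p)) :=
    hcB.integrableOn_Icc.mono_set Ioc_subset_Icc_self
  have hintA : ∀ t : ℝ, Integrable ((Ioc ξ (ξ + 2 / p) ∩ Ioo ξ t).indicator (fA p n)) := by
    intro t
    rw [integrable_indicator_iff (measurableSet_Ioc.inter measurableSet_Ioo)]
    exact hiA.mono_set inter_subset_left
  have hintB : ∀ t : ℝ, Integrable
      ((Ioc (ξ + 1 - 4 / p) (ξ + 1 - 2 / p) ∩ Ioo t (ξ + 1 - 2 / p)).indicator (fB p n)) := by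
    intro t
    rw [integrable_indicator_iff (measurableSet_Ioc.inter measurableSet_Ioo)]
    exact hiB.mono_set inter_subset_left
  have hrep : ∀ t : ℝ, S p n ξ t
      = ∫ x, ((Ioc ξ (ξ + 2 / p) ∩ Ioo ξ t).indicator (fA p n) x
        + (Ioc (ξ + 1 - 4 / p) (ξ + 1 - 2 / p) ∩ Ioo t (ξ + 1 - 2 / p)).indicator (fB p n) x) := by
    intro t
    rw [S_eq p n ξ t (by linarith) (by linarith), ← integral_add (hintA t) (hintB t)]
  have hane : ∀ t₁ t₂ : ℝ, ∀ᵐ x : ℝ, x ≠ t₁ ∧ x ≠ t₂ := by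
    intro t₁ t₂
    filter_upwards [compl_mem_ae_iff.2 (measure_singleton t₁),
      compl_mem_ae_iff.2 (measure_singleton t₂)] with x h1 h2
    exact ⟨h1, h2⟩
  refine ⟨?_, ?_, ?_⟩
  · -- decreasing on [ξ+1-4/p, m]
    intro t₁ t₂ ht1 ht12 ht2
    rw [hrep t₁, hrep t₂]
    refine integral_mono_ae ((hintA t₂).add (hintB t₂)) ((hintA t₁).add (hintB t₁)) ?_
    filter_upwards [hane t₁ t₂] with x hx
    obtain ⟨hx1, hx2⟩ := hx
    rcases lt_trichotomy x t₁ with hxa | hxa | hxa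
    · have e1 : (Ioc ξ (ξ + 2 / p) ∩ Ioo ξ t₂).indicator (fA p n) x
          = (Ioc ξ (ξ + 2 / p) ∩ Ioo ξ t₁).indicator (fA p n) x := by
        by_cases hm : x ∈ Ioc ξ (ξ + 2 / p) ∩ Ioo ξ t₁
        · rw [indicator_of_mem (show x ∈ Ioc ξ (ξ + 2 / p) ∩ Ioo ξ t₂ from ⟨hm.1, hm.2.1, by linarith [hm.2.2]⟩), indicator_of_mem hm]
        · rw [indicator_of_notMem (fun hh => hm ⟨hh.1, hh.2.1, hxa⟩), indicator_of_notMem hm]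
      have e2L : (Ioc (ξ + 1 - 4 / p) (ξ + 1 - 2 / p) ∩ Ioo t₂ (ξ + 1 - 2 / p)).indicator
          (fB p n) x = 0 := indicator_of_notMem (by rintro ⟨-, h, -⟩; linarith) _
      have e2R : (Ioc (ξ + 1 - 4 / p) (ξ + 1 - 2 / p) ∩ Ioo t₁ (ξ + 1 - 2 / p)).indicator
          (fB p n) x = 0 := indicator_of_notMem (by rintro ⟨-, h, -⟩; linarith) _
      rw [e1, e2L, e2R]
    · exact absurd hxa hx1
    · rcases lt_trichotomy x t₂ with hxb | hxb | hxb
      · -- t₁ < x < t₂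
        have hR1 : (Ioc ξ (ξ + 2 / p) ∩ Ioo ξ t₁).indicator (fA p n) x = 0 :=
          indicator_of_notMem (by rintro ⟨-, -, h⟩; linarith) _
        have hR2 : (Ioc (ξ + 1 - 4 / p) (ξ + 1 - 2 / p) ∩ Ioo t₁ (ξ + 1 - 2 / p)).indicator
            (fB p n) x = fB p n x :=
          indicator_of_mem (show x ∈ Ioc (ξ + 1 - 4 / p) (ξ + 1 - 2 / p) ∩ Ioo t₁ (ξ + 1 - 2 / p) from ⟨⟨by linarith, by linarith⟩, hxa, by linarith⟩) _
        have hL2 : (Ioc (ξ + 1 - 4 / p) (ξ + 1 - 2 / p) ∩ Ioo t₂ (ξ + 1 - 2 / p)).indicator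
            (fB p n) x = 0 := indicator_of_notMem (by rintro ⟨-, h, -⟩; linarith) _
        rw [hR1, hR2, hL2]
        rcases le_or_gt x ξ with h | h
        · rw [indicator_of_notMem (by rintro ⟨-, h1, -⟩; linarith)]
          linarith [hfB0 x]
        · rw [indicator_of_mem (show x ∈ Ioc ξ (ξ + 2 / p) ∩ Ioo ξ t₂ from ⟨⟨h, by linarith⟩, h, hxb⟩)]
          linarith [hfg x h (by linarith)]
      · exact absurd hxb hx2
      · -- x > t₂
        have hL1 : (Ioc ξ (ξ + 2 / p) ∩ Ioo ξ t₂).indicator (fA p n) x = 0 :=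
          indicator_of_notMem (by rintro ⟨-, -, h⟩; linarith) _
        have hR1 : (Ioc ξ (ξ + 2 / p) ∩ Ioo ξ t₁).indicator (fA p n) x = 0 :=
          indicator_of_notMem (by rintro ⟨-, -, h⟩; linarith) _
        rw [hL1, hR1]
        by_cases hm : x ∈ Ioc (ξ + 1 - 4 / p) (ξ + 1 - 2 / p) ∩ Ioo t₂ (ξ + 1 - 2 / p)
        · rw [indicator_of_mem hm, indicator_of_mem (show x ∈ Ioc (ξ + 1 - 4 / p) (ξ + 1 - 2 / p) ∩ Ioo t₁ (ξ + 1 - 2 / p) from ⟨hm.1, by linarith [hm.2.1], hm.2.2⟩)]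
        · rw [indicator_of_notMem hm]
          have := Set.indicator_nonneg (fun y _ => hfB0 y)
            (s := Ioc (ξ + 1 - 4 / p) (ξ + 1 - 2 / p) ∩ Ioo t₁ (ξ + 1 - 2 / p)) x
          linarith
  · -- increasing on [m, ξ+2/p]
    intro t₁ t₂ ht1 ht12 ht2
    rw [hrep t₁, hrep t₂]
    refine integral_mono_ae ((hintA t₁).add (hintB t₁)) ((hintA t₂).add (hintB t₂)) ?_
    filter_upwards [hane t₁ t₂] with x hx
    obtain ⟨hx1, hx2⟩ := hx
    rcases lt_trichotomy x t₁ with hxa | hxa | hxa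
    · have e1 : (Ioc ξ (ξ + 2 / p) ∩ Ioo ξ t₁).indicator (fA p n) x
          = (Ioc ξ (ξ + 2 / p) ∩ Ioo ξ t₂).indicator (fA p n) x := by
        by_cases hm : x ∈ Ioc ξ (ξ + 2 / p) ∩ Ioo ξ t₁
        · rw [indicator_of_mem hm, indicator_of_mem (show x ∈ Ioc ξ (ξ + 2 / p) ∩ Ioo ξ t₂ from ⟨hm.1, hm.2.1, by linarith [hm.2.2]⟩)]
        · rw [indicator_of_notMem hm, indicator_of_notMem (fun hh => hm ⟨hh.1, hh.2.1, hxa⟩)]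
      have e2L : (Ioc (ξ + 1 - 4 / p) (ξ + 1 - 2 / p) ∩ Ioo t₁ (ξ + 1 - 2 / p)).indicator
          (fB p n) x = 0 := indicator_of_notMem (by rintro ⟨-, h, -⟩; linarith) _
      have e2R : (Ioc (ξ + 1 - 4 / p) (ξ + 1 - 2 / p) ∩ Ioo t₂ (ξ + 1 - 2 / p)).indicator
          (fB p n) x = 0 := indicator_of_notMem (by rintro ⟨-, h, -⟩; linarith) _
      rw [e1, e2L, e2R]
    · exact absurd hxa hx1
    · rcases lt_trichotomy x t₂ with hxb | hxb | hxb
      · -- t₁ < x < t₂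
        have hL1 : (Ioc ξ (ξ + 2 / p) ∩ Ioo ξ t₁).indicator (fA p n) x = 0 :=
          indicator_of_notMem (by rintro ⟨-, -, h⟩; linarith) _
        have hR1 : (Ioc ξ (ξ + 2 / p) ∩ Ioo ξ t₂).indicator (fA p n) x = fA p n x :=
          indicator_of_mem (show x ∈ Ioc ξ (ξ + 2 / p) ∩ Ioo ξ t₂ from ⟨⟨by linarith, by linarith⟩, by linarith, hxb⟩) _
        have hR2 : (Ioc (ξ + 1 - 4 / p) (ξ + 1 - 2 / p) ∩ Ioo t₂ (ξ + 1 - 2 / p)).indicator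
            (fB p n) x = 0 := indicator_of_notMem (by rintro ⟨-, h, -⟩; linarith) _
        rw [hL1, hR1, hR2]
        by_cases h : x < ξ + 1 - 2 / p
        · rw [indicator_of_mem (show x ∈ Ioc (ξ + 1 - 4 / p) (ξ + 1 - 2 / p) ∩ Ioo t₁ (ξ + 1 - 2 / p) from ⟨⟨by linarith, by linarith⟩, hxa, h⟩)]
          linarith [hgf x (by linarith) (by linarith)]
        · rw [indicator_of_notMem (by rintro ⟨-, -, hh⟩; exact h hh)]
          linarith [hfA0 x]
      · exact absurd hxb hx2
      · -- x > t₂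
        have hL1 : (Ioc ξ (ξ + 2 / p) ∩ Ioo ξ t₁).indicator (fA p n) x = 0 :=
          indicator_of_notMem (by rintro ⟨-, -, h⟩; linarith) _
        have hR1 : (Ioc ξ (ξ + 2 / p) ∩ Ioo ξ t₂).indicator (fA p n) x = 0 :=
          indicator_of_notMem (by rintro ⟨-, -, h⟩; linarith) _
        rw [hL1, hR1]
        by_cases hm : x ∈ Ioc (ξ + 1 - 4 / p) (ξ + 1 - 2 / p) ∩ Ioo t₂ (ξ + 1 - 2 / p)
        · rw [indicator_of_mem hm, indicator_of_mem (show x ∈ Ioc (ξ + 1 - 4 / p) (ξ + 1 - 2 / p) ∩ Ioo t₁ (ξ + 1 - 2 / p) from ⟨hm.1, by linarith [hm.2.1], hm.2.2⟩)]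
        · rw [indicator_of_notMem hm,
            indicator_of_notMem (fun hh => hm ⟨hh.1, by linarith [hh.2.1], hh.2.2⟩)]
  · -- constant on [ξ+2/p, ξ+1]
    intro t₁ t₂ ht1 ht12 ht2
    rw [hrep t₁, hrep t₂]
    refine integral_congr_ae ?_
    filter_upwards [hane t₁ t₂] with x hx
    obtain ⟨hx1, hx2⟩ := hx
    have e2L : (Ioc (ξ + 1 - 4 / p) (ξ + 1 - 2 / p) ∩ Ioo t₁ (ξ + 1 - 2 / p)).indicator
        (fB p n) x = 0 := indicator_of_notMem (by rintro ⟨-, h, hh⟩; linarith) _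
    have e2R : (Ioc (ξ + 1 - 4 / p) (ξ + 1 - 2 / p) ∩ Ioo t₂ (ξ + 1 - 2 / p)).indicator
        (fB p n) x = 0 := indicator_of_notMem (by rintro ⟨-, h, hh⟩; linarith) _
    have e1 : (Ioc ξ (ξ + 2 / p) ∩ Ioo ξ t₁).indicator (fA p n) x
        = (Ioc ξ (ξ + 2 / p) ∩ Ioo ξ t₂).indicator (fA p n) x := by
      by_cases hm : x ∈ Ioc ξ (ξ + 2 / p)
      · have hxt1 : x < t₁ := lt_of_le_of_ne (by linarith [hm.2]) hx1
        have hxt2 : x < t₂ := lt_of_le_of_ne (by linarith [hm.2]) hx2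
        by_cases h : ξ < x
        · rw [indicator_of_mem (show x ∈ Ioc ξ (ξ + 2 / p) ∩ Ioo ξ t₁ from ⟨hm, h, hxt1⟩), indicator_of_mem (show x ∈ Ioc ξ (ξ + 2 / p) ∩ Ioo ξ t₂ from ⟨hm, h, hxt2⟩)]
        · rw [indicator_of_notMem (by rintro ⟨-, hh, -⟩; exact h hh),
            indicator_of_notMem (by rintro ⟨-, hh, -⟩; exact h hh)]
      · rw [indicator_of_notMem (fun hh => hm hh.1), indicator_of_notMem (fun hh => hm hh.1)]
    rw [e1, e2L, e2R]
end

section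
/- Let 4 ≤ p ≤ 6, let (ξ, ξ+2/p) be an interval at level n with ξ > 0, set m_ξ = ξ + 1/2 − 1/p, and let t satisfy ξ ≤ t ≤ ξ + 4/p. Then S(t) ≤ S(m_ξ), i.e. S is maximized at t = m_ξ. -/
open MeasureTheory Real Set

/-- At the left endpoint of an interval at level `n`, the sine vanishes. -/
lemma sin_zero_at_xi (p : ℝ) (n : ℕ) (ξ : ℝ) (hp : 0 < p)
    (hI : IntervalAtLevel p n ξ) : Real.sin (p / 2 * π * (ξ - n)) = 0 := by
  obtain ⟨x, hxU, hc⟩ := hI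
  have hcont : Continuous fun y : ℝ => Real.sin (p / 2 * π * (y - n)) := by continuity
  have hxI : x ∈ Set.Ioo ξ (ξ + 2 / p) := hc ▸ mem_connectedComponentIn hxU
  have hsub : Set.Ioo ξ (ξ + 2 / p) ⊆
      {y : ℝ | 0 < Real.sin (p / 2 * π * (y - n))} :=
    hc ▸ connectedComponentIn_subset _ x
  have hlt : ξ < ξ + 2 / p := by
    have : 0 < 2 / p := by positivity
    linarith
  have h0 : 0 ≤ Real.sin (p / 2 * π * (ξ - n)) := by
    have hclosed : IsClosed {y : ℝ | 0 ≤ Real.sin (p / 2 * π * (y - n))} :=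
      isClosed_le continuous_const hcont
    have hsub2 : Set.Icc ξ (ξ + 2 / p) ⊆
        {y : ℝ | 0 ≤ Real.sin (p / 2 * π * (y - n))} := by
      rw [← closure_Ioo hlt.ne]
      refine closure_minimal ?_ hclosed
      intro y hy
      simp only [Set.mem_setOf_eq]
      exact (hsub hy).le
    exact hsub2 ⟨le_refl _, hlt.le⟩
  rcases h0.lt_or_eq with h | h
  · exfalso
    have hIco : Set.Ico ξ (ξ + 2 / p) ⊆
        {y : ℝ | 0 < Real.sin (p / 2 * π * (y - n))} := by
      intro y hy
      rcases eq_or_lt_of_le hy.1 with rfl | h'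
      · exact h
      · exact hsub ⟨h', hy.2⟩
    have hsc := isPreconnected_Ico.subset_connectedComponentIn
      (Set.mem_Ico.mpr ⟨hxI.1.le, hxI.2⟩) hIco
    rw [hc] at hsc
    exact (lt_irrefl ξ) (hsc ⟨le_refl _, hlt⟩).1
  · exact h.symm

lemma trig_aux (B c : ℝ) :
    Real.sin (B - c) ^ 2 - Real.sin B ^ 2 = -(Real.sin (2 * B - c) * Real.sin c) := by
  have e : 2 * B - c = B + (B - c) := by ring
  rw [e, Real.sin_add, Real.sin_sub, Real.cos_sub]
  nlinarith [Real.sin_sq_add_cos_sq B, Real.sin_sq_add_cos_sq c]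

/-- `Ioo c b = Ioo (min c b) b`. -/
lemma Ioo_min_left (c b : ℝ) : Set.Ioo c b = Set.Ioo (min c b) b := by
  ext y
  simp only [Set.mem_Ioo, min_lt_iff]
  constructor
  · rintro ⟨h1, h2⟩; exact ⟨Or.inl h1, h2⟩
  · rintro ⟨h1, h2⟩
    rcases h1 with h1 | h1
    · exact ⟨h1, h2⟩
    · linarith

set_option maxHeartbeats 1000000 in
theorem stmt14 (p : ℝ) (n : ℕ) (ξ t : ℝ) (hp4 : 4 ≤ p) (hp6 : p ≤ 6)
    (hI : IntervalAtLevel p n ξ) (hξ : 0 < ξ)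
    (ht1 : ξ ≤ t) (ht2 : t ≤ ξ + 4 / p) :
    S p n ξ t ≤ S p n ξ (ξ + 1 / 2 - 1 / p) := by
  have hp0 : 0 < p := by linarith
  have hπ : (0:ℝ) < π := Real.pi_pos
  -- basic order facts about 1/p
  have hq4 : 1 / p ≤ 1 / 4 := by
    rw [div_le_div_iff₀ hp0 (by norm_num)]; linarith
  have hq6 : (1:ℝ) / 6 ≤ 1 / p := by
    rw [div_le_div_iff₀ (by norm_num) hp0]; linarith
  have e2 : 2 / p = 2 * (1 / p) := by ring
  have e4 : 4 / p = 4 * (1 / p) := by ring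
  -- the integer coming from the interval condition
  obtain ⟨k, hk⟩ : ∃ k : ℤ, p * (ξ - n) = 2 * k := by
    have h0 := sin_zero_at_xi p n ξ hp0 hI
    rw [Real.sin_eq_zero_iff] at h0
    obtain ⟨k, hk⟩ := h0
    refine ⟨k, ?_⟩
    have h2 : p * (ξ - n) * π = 2 * k * π := by linear_combination (-2 : ℝ) * hk
    exact mul_right_cancel₀ Real.pi_ne_zero h2
  set b₁ : ℝ := ξ + 2 / p with hb₁
  set a₂ : ℝ := ξ + 1 - 4 / p with ha₂
  set b₂ : ℝ := ξ + 1 - 2 / p with hb₂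
  set m : ℝ := ξ + 1 / 2 - 1 / p with hm
  have hξb₁ : ξ < b₁ := by rw [hb₁, e2]; linarith
  have hξm : ξ < m := by rw [hm]; linarith
  have hmb₁ : m ≤ b₁ := by rw [hm, hb₁, e2]; linarith
  have ha₂m : a₂ ≤ m := by rw [ha₂, hm, e4]; linarith
  have hmb₂ : m ≤ b₂ := by rw [hm, hb₂, e2]; linarith
  have hb₁b₂ : b₁ ≤ b₂ := by rw [hb₁, hb₂, e2]; linarith
  have hξa₂ : ξ ≤ a₂ := by rw [ha₂, e4]; linarith
  have ha₂0 : 0 < a₂ := lt_of_lt_of_le hξ hξa₂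
  -- the two integrands
  set F₁ : ℝ → ℝ := fun y => Real.sin (p / 2 * π * (y - n)) ^ 2 / (π ^ 2 * y ^ 2)
    with hF₁
  set F₂ : ℝ → ℝ := fun y => Real.sin (p / 2 * π * (y - ((n : ℝ) + 1))) ^ 2 / (π ^ 2 * y ^ 2)
    with hF₂
  have hF₁0 : ∀ y : ℝ, 0 ≤ F₁ y := fun y => by
    simp only [hF₁]; positivity
  have hF₂0 : ∀ y : ℝ, 0 ≤ F₂ y := fun y => by
    simp only [hF₂]; positivity
  -- integrability
  have hInt₁ : ∀ a b : ℝ, ξ ≤ a → ξ ≤ b → IntervalIntegrable F₁ volume a b := by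
    intro a b ha hb
    apply ContinuousOn.intervalIntegrable
    simp only [hF₁]
    apply ContinuousOn.div (Continuous.continuousOn (by fun_prop))
      (Continuous.continuousOn (by fun_prop))
    intro y hy
    have hy0 : 0 < y := lt_of_lt_of_le hξ (le_trans (le_min ha hb) hy.1)
    positivity
  have hInt₂ : ∀ a b : ℝ, ξ ≤ a → ξ ≤ b → IntervalIntegrable F₂ volume a b := by
    intro a b ha hb
    apply ContinuousOn.intervalIntegrable
    simp only [hF₂]
    apply ContinuousOn.div (Continuous.continuousOn (by fun_prop))
      (Continuous.continuousOn (by fun_prop))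
    intro y hy
    have hy0 : 0 < y := lt_of_lt_of_le hξ (le_trans (le_min ha hb) hy.1)
    positivity
  -- normal form for S
  have hS : ∀ s : ℝ, ξ ≤ s → S p n ξ s =
      (∫ x in ξ..(min s b₁), F₁ x) + ∫ x in (min (max s a₂) b₂)..b₂, F₂ x := by
    intro s hs
    have h1 : (∫ x in ξ..b₁, (Set.Ioo ξ s).indicator F₁ x) = ∫ x in ξ..(min s b₁), F₁ x := by
      rw [intervalIntegral.integral_of_le hξb₁.le,
        intervalIntegral.integral_of_le (le_min hs hξb₁.le),
        MeasureTheory.setIntegral_indicator measurableSet_Ioo,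
        MeasureTheory.integral_Ioc_eq_integral_Ioo]
      apply MeasureTheory.setIntegral_congr_set
      have h := MeasureTheory.ae_eq_set_inter
        (MeasureTheory.Ioo_ae_eq_Ioc (μ := volume) (a := ξ) (b := b₁)).symm
        (Filter.EventuallyEq.refl _ (Set.Ioo ξ s))
      rwa [Set.Ioo_inter_Ioo, max_self, min_comm b₁ s] at h
    have h2 : (∫ x in a₂..b₂, (Set.Ioo s b₂).indicator F₂ x)
        = ∫ x in (min (max s a₂) b₂)..b₂, F₂ x := by
      rw [intervalIntegral.integral_of_le (le_trans ha₂m hmb₂),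
        intervalIntegral.integral_of_le (min_le_right _ _),
        MeasureTheory.setIntegral_indicator measurableSet_Ioo,
        MeasureTheory.integral_Ioc_eq_integral_Ioo]
      apply MeasureTheory.setIntegral_congr_set
      have h := MeasureTheory.ae_eq_set_inter
        (MeasureTheory.Ioo_ae_eq_Ioc (μ := volume) (a := a₂) (b := b₂)).symm
        (Filter.EventuallyEq.refl _ (Set.Ioo s b₂))
      rwa [Set.Ioo_inter_Ioo, min_self, max_comm a₂ s, Ioo_min_left (max s a₂) b₂] at h
    simp only [S]
    rw [← hF₁, ← hF₂, ← hb₁, ← ha₂, ← hb₂, h1, h2]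
  -- the key pointwise numerator identity
  have hnum : ∀ x : ℝ,
      Real.sin (p / 2 * π * (x - ((n : ℝ) + 1))) ^ 2 - Real.sin (p / 2 * π * (x - n)) ^ 2
        = -(Real.sin (p * π * (x - ξ) - p * π / 2) * Real.sin (p * π / 2)) := by
    intro x
    have e : p / 2 * π * (x - ((n : ℝ) + 1)) = p / 2 * π * (x - n) - p * π / 2 := by ring
    rw [e, trig_aux]
    have e2' : 2 * (p / 2 * π * (x - n)) - p * π / 2
        = (p * π * (x - ξ) - p * π / 2) + k * (2 * π) := by
      linear_combination π * hk
    rw [e2', Real.sin_add_int_mul_two_pi]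
  have hpπ4 : 4 * π ≤ p * π := mul_le_mul_of_nonneg_right hp4 hπ.le
  have hpπ6 : p * π ≤ 6 * π := mul_le_mul_of_nonneg_right hp6 hπ.le
  have hsinhalf : 0 ≤ Real.sin (p * π / 2) := by
    have e : p * π / 2 - 2 * π + 2 * π = p * π / 2 := by ring
    rw [← e, Real.sin_add_two_pi]
    apply Real.sin_nonneg_of_nonneg_of_le_pi <;> linarith
  -- on [a₂, m] : F₂ ≤ F₁
  have hle₂ : ∀ x ∈ Set.Icc a₂ m, F₂ x ≤ F₁ x := by
    intro x hx
    have hx0 : 0 < x := lt_of_lt_of_le ha₂0 hx.1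
    have hb1 : 1 - 4 / p ≤ x - ξ := by have := hx.1; rw [ha₂] at this; linarith
    have hb2 : x - ξ ≤ 1 / 2 - 1 / p := by have := hx.2; rw [hm] at this; linarith
    have kl : p * π * (1 - 4 / p) ≤ p * π * (x - ξ) :=
      mul_le_mul_of_nonneg_left hb1 (by positivity)
    have ku : p * π * (x - ξ) ≤ p * π * (1 / 2 - 1 / p) :=
      mul_le_mul_of_nonneg_left hb2 (by positivity)
    have kl' : p * π * (1 - 4 / p) = p * π - 4 * π := by field_simp
    have ku' : p * π * (1 / 2 - 1 / p) = p * π / 2 - π := by field_simp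
    have hθ : 0 ≤ Real.sin (p * π * (x - ξ) - p * π / 2) := by
      have e : p * π * (x - ξ) - p * π / 2
          = (p * π * (x - ξ) - p * π / 2 + 2 * π) - 2 * π := by ring
      rw [e, Real.sin_sub_two_pi]
      apply Real.sin_nonneg_of_nonneg_of_le_pi <;> linarith
    have hd : F₂ x - F₁ x ≤ 0 := by
      simp only [hF₁, hF₂]
      rw [div_sub_div_same, hnum x]
      apply div_nonpos_iff.mpr
      refine Or.inr ⟨?_, by positivity⟩
      exact neg_nonpos.mpr (mul_nonneg hθ hsinhalf)
    linarith
  -- on [m, b₁] : F₁ ≤ F₂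
  have hle₁ : ∀ x ∈ Set.Icc m b₁, F₁ x ≤ F₂ x := by
    intro x hx
    have hx0 : 0 < x := lt_of_lt_of_le (lt_of_lt_of_le hξ hξm.le) hx.1
    have hb1 : 1 / 2 - 1 / p ≤ x - ξ := by have := hx.1; rw [hm] at this; linarith
    have hb2 : x - ξ ≤ 2 / p := by have := hx.2; rw [hb₁] at this; linarith
    have kl : p * π * (1 / 2 - 1 / p) ≤ p * π * (x - ξ) :=
      mul_le_mul_of_nonneg_left hb1 (by positivity)
    have ku : p * π * (x - ξ) ≤ p * π * (2 / p) :=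
      mul_le_mul_of_nonneg_left hb2 (by positivity)
    have kl' : p * π * (1 / 2 - 1 / p) = p * π / 2 - π := by field_simp
    have ku' : p * π * (2 / p) = 2 * π := by field_simp
    have hθ : Real.sin (p * π * (x - ξ) - p * π / 2) ≤ 0 := by
      have h := Real.sin_nonneg_of_nonneg_of_le_pi
        (x := -(p * π * (x - ξ) - p * π / 2)) (by linarith) (by linarith)
      rw [Real.sin_neg] at h
      linarith
    have hd : 0 ≤ F₂ x - F₁ x := by
      simp only [hF₁, hF₂]
      rw [div_sub_div_same, hnum x]
      have h1 : 0 ≤ -(Real.sin (p * π * (x - ξ) - p * π / 2) * Real.sin (p * π / 2)) :=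
        neg_nonneg.mpr (mul_nonpos_of_nonpos_of_nonneg hθ hsinhalf)
      exact div_nonneg h1 (by positivity)
    linarith
  -- rewrite S at both points
  rw [hS t ht1, hS (ξ + 1 / 2 - 1 / p) (by rw [← hm]; exact hξm.le), ← hm]
  have hmin_m : min m b₁ = m := min_eq_left hmb₁
  have hmax_m : max m a₂ = m := max_eq_left ha₂m
  rw [hmax_m, hmin_m, min_eq_left hmb₂]
  -- case split according to the position of t relative to m
  rcases le_total t m with htm | htm
  · -- t ≤ m
    have hc₁ : min t b₁ = t := min_eq_left (le_trans htm hmb₁)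
    set d : ℝ := max t a₂ with hd
    have hdm : d ≤ m := max_le htm ha₂m
    have hc₂ : min d b₂ = d := min_eq_left (le_trans hdm hmb₂)
    rw [hc₁, hc₂]
    have hξd : ξ ≤ d := le_trans ht1 (le_max_left _ _)
    have htd : t ≤ d := le_max_left _ _
    have ha₂d : a₂ ≤ d := le_max_right _ _
    have s1 : (∫ x in ξ..m, F₁ x)
        = (∫ x in ξ..t, F₁ x) + (∫ x in t..d, F₁ x) + (∫ x in d..m, F₁ x) := by
      rw [intervalIntegral.integral_add_adjacent_intervals (hInt₁ ξ t le_rfl ht1)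
        (hInt₁ t d ht1 hξd),
        intervalIntegral.integral_add_adjacent_intervals (hInt₁ ξ d le_rfl hξd)
        (hInt₁ d m hξd hξm.le)]
    have s2 : (∫ x in d..b₂, F₂ x) = (∫ x in d..m, F₂ x) + (∫ x in m..b₂, F₂ x) :=
      (intervalIntegral.integral_add_adjacent_intervals (hInt₂ d m hξd hξm.le)
        (hInt₂ m b₂ hξm.le (le_trans hξm.le hmb₂))).symm
    rw [s1, s2]
    have m1 : (∫ x in d..m, F₂ x) ≤ ∫ x in d..m, F₁ x :=
      intervalIntegral.integral_mono_on hdm (hInt₂ d m hξd hξm.le) (hInt₁ d m hξd hξm.le)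
        (fun x hx => hle₂ x ⟨le_trans ha₂d hx.1, hx.2⟩)
    have m2 : 0 ≤ ∫ x in t..d, F₁ x :=
      intervalIntegral.integral_nonneg htd (fun u _ => hF₁0 u)
    linarith
  · -- m ≤ t
    have hcmax : max t a₂ = t := max_eq_left (le_trans ha₂m htm)
    rw [hcmax]
    set c₁ : ℝ := min t b₁ with hc₁'
    set c₂ : ℝ := min t b₂ with hc₂'
    have hmc₁ : m ≤ c₁ := le_min htm hmb₁
    have hc₁c₂ : c₁ ≤ c₂ := min_le_min le_rfl hb₁b₂
    have hξc₁ : ξ ≤ c₁ := le_trans hξm.le hmc₁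
    have hξc₂ : ξ ≤ c₂ := le_trans hξc₁ hc₁c₂
    have hc₁b₁ : c₁ ≤ b₁ := min_le_right _ _
    have hξb₂ : ξ ≤ b₂ := le_trans hξm.le hmb₂
    have s1 : (∫ x in ξ..c₁, F₁ x) = (∫ x in ξ..m, F₁ x) + (∫ x in m..c₁, F₁ x) :=
      (intervalIntegral.integral_add_adjacent_intervals (hInt₁ ξ m le_rfl hξm.le)
        (hInt₁ m c₁ hξm.le hξc₁)).symm
    have s2 : (∫ x in m..b₂, F₂ x)
        = (∫ x in m..c₁, F₂ x) + (∫ x in c₁..c₂, F₂ x) + (∫ x in c₂..b₂, F₂ x) := by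
      rw [intervalIntegral.integral_add_adjacent_intervals (hInt₂ m c₁ hξm.le hξc₁)
        (hInt₂ c₁ c₂ hξc₁ hξc₂),
        intervalIntegral.integral_add_adjacent_intervals (hInt₂ m c₂ hξm.le hξc₂)
        (hInt₂ c₂ b₂ hξc₂ hξb₂)]
    rw [s1, s2]
    have m1 : (∫ x in m..c₁, F₁ x) ≤ ∫ x in m..c₁, F₂ x :=
      intervalIntegral.integral_mono_on hmc₁ (hInt₁ m c₁ hξm.le hξc₁)
        (hInt₂ m c₁ hξm.le hξc₁)
        (fun x hx => hle₁ x ⟨hx.1, le_trans hx.2 hc₁b₁⟩)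
    have m2 : 0 ≤ ∫ x in c₁..c₂, F₂ x :=
      intervalIntegral.integral_nonneg hc₁c₂ (fun u _ => hF₂0 u)
    linarith
end
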